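/- The function r ↦ √(r² − x₀²) + √(r² − x₁²) + r·(arccos(x₀/r) − arccos(x₁/r)) is nondecreasing on [max(|x₀|, |x₁|), ∞), for fixed reals x₀ < x₁. -/

import Mathlib

open Real

private lemma sqrt_part_deriv (x r : ℝ) (hx : |x| < r) :
    HasDerivAt (fun r : ℝ => Real.sqrt (r^2 - x^2)) (r / Real.sqrt (r^2 - x^2)) r := by
  have hpos : 0 < r^2 - x^2 := by
    have := abs_nonneg x
    nlinarith [sq_abs x]
  have h1 : HasDerivAt (fun r : ℝ => r^2 - x^2) (2 * r) r := by
    simpa using ((hasDerivAt_pow 2 r).sub_const (x^2))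
  have h2 := (Real.hasDerivAt_sqrt (ne_of_gt hpos)).comp r h1
  refine h2.congr_deriv ?_
  have hs : Real.sqrt (r^2 - x^2) ≠ 0 := by positivity
  field_simp

private lemma arccos_part_deriv (x r : ℝ) (hx : |x| < r) :
    HasDerivAt (fun r : ℝ => Real.arccos (x / r))
      (x / (r * Real.sqrt (r^2 - x^2))) r := by
  have hr : 0 < r := lt_of_le_of_lt (abs_nonneg x) hx
  have hpos : 0 < r^2 - x^2 := by nlinarith [sq_abs x, abs_nonneg x]
  have hne1 : x / r ≠ -1 := by
    have : -1 < x / r := by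
      rw [lt_div_iff₀ hr]
      nlinarith [neg_abs_le x]
    linarith
  have hne2 : x / r ≠ 1 := by
    have : x / r < 1 := by
      rw [div_lt_one hr]
      exact lt_of_le_of_lt (le_abs_self x) hx
    linarith
  have h1 : HasDerivAt (fun r : ℝ => x / r) (-x / r^2) r := by
    simpa [div_eq_mul_inv] using (hasDerivAt_inv (ne_of_gt hr)).const_mul x
  have h2 := (Real.hasDerivAt_arccos hne1 hne2).comp r h1
  refine h2.congr_deriv ?_
  have hsq : Real.sqrt (1 - (x/r)^2) = Real.sqrt (r^2 - x^2) / r := by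
    have he : 1 - (x/r)^2 = (r^2 - x^2)/r^2 := by field_simp
    rw [he, Real.sqrt_div hpos.le, Real.sqrt_sq hr.le]
  rw [hsq]
  have hs : Real.sqrt (r^2 - x^2) ≠ 0 := by positivity
  field_simp

theorem stmt_7 (x₀ x₁ : ℝ) (hlt : x₀ < x₁) :
    MonotoneOn (fun r : ℝ =>
        Real.sqrt (r^2 - x₀^2) + Real.sqrt (r^2 - x₁^2)
          + r * (Real.arccos (x₀/r) - Real.arccos (x₁/r)))
      (Set.Ici (max |x₀| |x₁|)) := by
  set M := max |x₀| |x₁| with hM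
  have hM0 : 0 < M := by
    rcases lt_trichotomy x₁ 0 with h | h | h
    · have : 0 < |x₀| := by rw [abs_pos]; intro h'; simp [h'] at hlt; linarith
      exact lt_of_lt_of_le this (le_max_left _ _)
    · have : 0 < |x₀| := by rw [abs_pos]; intro h'; simp [h', h] at hlt
      exact lt_of_lt_of_le this (le_max_left _ _)
    · exact lt_of_lt_of_le (abs_pos.mpr (ne_of_gt h)) (le_max_right _ _)
  have hderiv : ∀ r ∈ interior (Set.Ici M),
      HasDerivAt (fun r : ℝ =>
        Real.sqrt (r^2 - x₀^2) + Real.sqrt (r^2 - x₁^2)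
          + r * (Real.arccos (x₀/r) - Real.arccos (x₁/r)))
      ((r + x₀) / Real.sqrt (r^2 - x₀^2) + (r - x₁) / Real.sqrt (r^2 - x₁^2)
        + (Real.arccos (x₀/r) - Real.arccos (x₁/r))) r := by
    intro r hr
    rw [interior_Ici] at hr
    have h₀ : |x₀| < r := lt_of_le_of_lt (le_max_left _ _) hr
    have h₁ : |x₁| < r := lt_of_le_of_lt (le_max_right _ _) hr
    have hrpos : 0 < r := lt_of_le_of_lt (abs_nonneg x₀) h₀
    have hp₀ : 0 < r^2 - x₀^2 := by nlinarith [sq_abs x₀, abs_nonneg x₀]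
    have hp₁ : 0 < r^2 - x₁^2 := by nlinarith [sq_abs x₁, abs_nonneg x₁]
    have hs₀ : Real.sqrt (r^2 - x₀^2) ≠ 0 := by positivity
    have hs₁ : Real.sqrt (r^2 - x₁^2) ≠ 0 := by positivity
    have hA := (sqrt_part_deriv x₀ r h₀).add (sqrt_part_deriv x₁ r h₁)
    have hB := (hasDerivAt_id r).mul
      ((arccos_part_deriv x₀ r h₀).sub (arccos_part_deriv x₁ r h₁))
    have hC := hA.add hB
    refine hC.congr_deriv ?_
    simp only [Pi.sub_apply, id]
    field_simp
    ring
  apply monotoneOn_of_deriv_nonneg (convex_Ici M)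
  · -- continuity
    apply ContinuousOn.add
    · exact ((Real.continuous_sqrt.comp (by continuity)).add
        (Real.continuous_sqrt.comp (by continuity))).continuousOn
    · apply ContinuousOn.mul continuousOn_id
      apply ContinuousOn.sub
      · exact Real.continuous_arccos.comp_continuousOn
          (continuousOn_const.div continuousOn_id
            (fun r hr => ne_of_gt (lt_of_lt_of_le hM0 hr)))
      · exact Real.continuous_arccos.comp_continuousOn
          (continuousOn_const.div continuousOn_id
            (fun r hr => ne_of_gt (lt_of_lt_of_le hM0 hr)))
  · intro r hr
    exact (hderiv r hr).differentiableAt.differentiableWithinAt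
  · intro r hr
    rw [(hderiv r hr).deriv]
    rw [interior_Ici] at hr
    have h₀ : |x₀| < r := lt_of_le_of_lt (le_max_left _ _) hr
    have h₁ : |x₁| < r := lt_of_le_of_lt (le_max_right _ _) hr
    have hrpos : 0 < r := lt_of_le_of_lt (abs_nonneg x₀) h₀
    have hp₀ : 0 < r^2 - x₀^2 := by nlinarith [sq_abs x₀, abs_nonneg x₀]
    have hp₁ : 0 < r^2 - x₁^2 := by nlinarith [sq_abs x₁, abs_nonneg x₁]
    have t1 : 0 ≤ (r + x₀) / Real.sqrt (r^2 - x₀^2) := by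
      apply div_nonneg _ (Real.sqrt_nonneg _)
      nlinarith [neg_abs_le x₀]
    have t2 : 0 ≤ (r - x₁) / Real.sqrt (r^2 - x₁^2) := by
      apply div_nonneg _ (Real.sqrt_nonneg _)
      nlinarith [le_abs_self x₁]
    have t3 : Real.arccos (x₁/r) ≤ Real.arccos (x₀/r) := by
      have mem₀ : x₀/r ∈ Set.Icc (-1:ℝ) 1 :=
        ⟨by rw [le_div_iff₀ hrpos]; nlinarith [neg_abs_le x₀],
         by rw [div_le_one hrpos]; nlinarith [le_abs_self x₀]⟩
      have mem₁ : x₁/r ∈ Set.Icc (-1:ℝ) 1 :=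
        ⟨by rw [le_div_iff₀ hrpos]; nlinarith [neg_abs_le x₁],
         by rw [div_le_one hrpos]; nlinarith [le_abs_self x₁]⟩
      exact (Real.strictAntiOn_arccos mem₀ mem₁
        ((div_lt_div_iff_of_pos_right hrpos).mpr hlt)).le
    linarith
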